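/- (Multi-episode equivalence of DPT and posterior sampling; the online deployment version of Theorem 1.) Fix K, H ≥ 1, a test task τ_c ∈ T, an initial state distribution ρ ∈ PMF(S), and an initial dataset D_{(0)}. An episode is a tuple e = (s_1, a_1, r_1, …, s_H, a_H, r_H, s_{H+1}) ∈ (S × A × R)^H × S, contributing the transition tuples (s_h, a_h, s_{h+1}, r_h) for h = 1,…,H; D_{(k)} denotes D_{(0)} concatenated with the transition tuples of episodes e_1,…,e_k. At episode k, the posterior-sampling episode probability is p^ps_k(e) = (Σ_τ w(τ | D_{(k−1)}) ∏_{h=1}^H π*_τ(a_h | s_h)) · ρ(s_1) · ∏_{h=1}^H P_{τ_c}(s_{h+1} | s_h, a_h) · R_{τ_c}(r_h | s_h, a_h), and the DPT episode probability is p^M_k(e) = ρ(s_1) · ∏_{h=1}^H M(a_h | s_h, D_{(k−1)}, ξ_{h−1}) · P_{τ_c}(s_{h+1} | s_h, a_h) · R_{τ_c}(r_h | s_h, a_h), where ξ_{h−1} = (s_1, a_1, …, s_{h−1}, a_{h−1}). Then, adopting the convention x/0 = 0 in the definitions of w and M, for every sequence of episodes (e_1,…,e_K) and every k ∈ {1,…,K},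 p^ps_k(e_k) = p^M_k(e_k); consequently the joint distributions of the K episodes generated by the two processes coincide: ∏_{k=1}^K p^ps_k(e_k) = ∏_{k=1}^K p^M_k(e_k). -/
import Mathlib


open scoped BigOperators

/-- An in-context dataset entry `(s, a, s', r)`. -/
abbrev Entry (S A Rw : Type*) := S × A × S × Rw

variable {T S A Rw : Type*}

/-- Environment likelihood `L_τ(D) = ∏ᵢ P_τ(s'ᵢ | sᵢ, aᵢ) · R_τ(rᵢ | sᵢ, aᵢ)`. -/
noncomputable def envLik (Pk : T → S → A → PMF S) (Rk : T → S → A → PMF Rw)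
    (τ : T) (D : List (Entry S A Rw)) : ℝ :=
  (D.map fun e => (Pk τ e.1 e.2.1 e.2.2.1).toReal * (Rk τ e.1 e.2.1 e.2.2.2).toReal).prod

/-- Posterior-sampling posterior `w(τ | D)` (with the convention `x / 0 = 0`). -/
noncomputable def psPost [Fintype T] (Pk : T → S → A → PMF S) (Rk : T → S → A → PMF Rw)
    (prior : PMF T) (D : List (Entry S A Rw)) (τ : T) : ℝ :=
  (prior τ).toReal * envLik Pk Rk τ D /
    ∑ τ' : T, (prior τ').toReal * envLik Pk Rk τ' D

/-- Prefix weight `W_h(τ) = ∏ᵢ π*_τ(aᵢ | sᵢ)` of a history `ξ_h` (equal to `1` if `h = 0`). -/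
noncomputable def histW (πs : T → S → PMF A) (τ : T) (ξ : List (S × A)) : ℝ :=
  (ξ.map fun p => (πs τ p.1 p.2).toReal).prod

/-- DPT conditional action distribution
`M(a | s, D, ξ) = (Σ_τ w(τ|D) W(τ) π*_τ(a|s)) / (Σ_τ w(τ|D) W(τ))` (with `x / 0 = 0`). -/
noncomputable def dptM [Fintype T] (Pk : T → S → A → PMF S) (Rk : T → S → A → PMF Rw)
    (πs : T → S → PMF A) (prior : PMF T)
    (D : List (Entry S A Rw)) (ξ : List (S × A)) (s : S) (a : A) : ℝ :=
  (∑ τ : T, psPost Pk Rk prior D τ * histW πs τ ξ * (πs τ s a).toReal) /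
    (∑ τ : T, psPost Pk Rk prior D τ * histW πs τ ξ)


/-- The transition tuples `(s_h, a_h, s_{h+1}, r_h)`, `h = 1, …, H`, contributed by an
episode `(s_1, a_1, r_1, …, s_H, a_H, r_H, s_{H+1})`, given as a list of triples
`(s_h, a_h, r_h)` together with the final state `s_{H+1}`. -/
def epEntries : List (S × A × Rw) → S → List (Entry S A Rw)
  | [], _ => []
  | [(s, a, r)], sf => [(s, a, sf, r)]
  | (s, a, r) :: p :: rest, sf => (s, a, p.1, r) :: epEntries (p :: rest) sf

/-- The state-action pairs `(s_h, a_h)` of an episode. -/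
def epPairs (l : List (S × A × Rw)) : List (S × A) :=
  l.map fun t => (t.1, t.2.1)

/-- `ρ(s₁)` for an episode. -/
noncomputable def epInit (ρ : PMF S) : List (S × A × Rw) → S → ℝ
  | [], sf => (ρ sf).toReal
  | t :: _, _ => (ρ t.1).toReal

/-- Posterior-sampling episode probability at dataset `D`:
`p^ps(e) = (Σ_τ w(τ|D) ∏_h π*_τ(a_h|s_h)) · ρ(s₁)
  · ∏_h P_{τc}(s_{h+1}|s_h,a_h) · R_{τc}(r_h|s_h,a_h)`. -/
noncomputable def epPs [Fintype T] (Pk : T → S → A → PMF S) (Rk : T → S → A → PMF Rw)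
    (πs : T → S → PMF A) (prior : PMF T) (τc : T) (ρ : PMF S)
    (D : List (Entry S A Rw)) (e : List (S × A × Rw) × S) : ℝ :=
  (∑ τ : T, psPost Pk Rk prior D τ * histW πs τ (epPairs e.1)) *
    epInit ρ e.1 e.2 * envLik Pk Rk τc (epEntries e.1 e.2)

/-- DPT episode probability at dataset `D`:
`p^M(e) = ρ(s₁) · ∏_h M(a_h|s_h, D, ξ_{h-1}) · P_{τc}(s_{h+1}|s_h,a_h) · R_{τc}(r_h|s_h,a_h)`. -/
noncomputable def epM [Fintype T] (Pk : T → S → A → PMF S) (Rk : T → S → A → PMF Rw)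
    (πs : T → S → PMF A) (prior : PMF T) (τc : T) (ρ : PMF S)
    (D : List (Entry S A Rw)) (e : List (S × A × Rw) × S) : ℝ :=
  epInit ρ e.1 e.2 *
    (∏ i : Fin (epPairs e.1).length,
      dptM Pk Rk πs prior D ((epPairs e.1).take i)
        ((epPairs e.1).get i).1 ((epPairs e.1).get i).2) *
    envLik Pk Rk τc (epEntries e.1 e.2)

/-- The dataset `D_{(k)}`: the initial dataset `D₀` concatenated with the transition tuples
of the first `k` episodes `e_1, …, e_k`. -/
def datasetUpTo {K : ℕ} (D0 : List (Entry S A Rw))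
    (es : Fin K → List (S × A × Rw) × S) (k : ℕ) : List (Entry S A Rw) :=
  D0 ++ ((List.ofFn fun i : Fin K => epEntries (es i).1 (es i).2).take k).flatten

section Aux

variable [Fintype T]

lemma psPost_nonneg (Pk : T → S → A → PMF S) (Rk : T → S → A → PMF Rw)
    (prior : PMF T) (D : List (Entry S A Rw)) (τ : T) :
    0 ≤ psPost Pk Rk prior D τ := by
  unfold psPost envLik
  apply div_nonneg
  · exact mul_nonneg ENNReal.toReal_nonneg (List.prod_nonneg (by
      intro x hx
      simp only [List.mem_map] at hx
      obtain ⟨e, _, rfl⟩ := hx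
      exact mul_nonneg ENNReal.toReal_nonneg ENNReal.toReal_nonneg))
  · refine Finset.sum_nonneg fun τ' _ => ?_
    exact mul_nonneg ENNReal.toReal_nonneg (List.prod_nonneg (by
      intro x hx
      simp only [List.mem_map] at hx
      obtain ⟨e, _, rfl⟩ := hx
      exact mul_nonneg ENNReal.toReal_nonneg ENNReal.toReal_nonneg))

lemma histW_nonneg (πs : T → S → PMF A) (τ : T) (ξ : List (S × A)) :
    0 ≤ histW πs τ ξ := by
  unfold histW
  apply List.prod_nonneg
  intro x hx
  simp only [List.mem_map] at hx
  obtain ⟨p, _, rfl⟩ := hx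
  exact ENNReal.toReal_nonneg

lemma histW_snoc (πs : T → S → PMF A) (τ : T) (l : List (S × A)) (p : S × A) :
    histW πs τ (l ++ [p]) = histW πs τ l * (πs τ p.1 p.2).toReal := by
  simp [histW]

/-- Snoc-splitting of a product over prefixes. -/
lemma prod_fin_snoc {α : Type*} (l : List α) (p : α) (g : List α → α → ℝ) :
    (∏ i : Fin (l ++ [p]).length, g ((l ++ [p]).take i) ((l ++ [p]).get i)) =
      (∏ i : Fin l.length, g (l.take i) (l.get i)) * g l p := by
  have h : (l ++ [p]).length = l.length + 1 := by simp
  have step1 : (∏ i : Fin (l ++ [p]).length, g ((l ++ [p]).take i) ((l ++ [p]).get i)) =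
      ∏ j : Fin (l.length + 1),
        g ((l ++ [p]).take j) ((l ++ [p]).get (Fin.cast h.symm j)) := by
    exact Fintype.prod_equiv (finCongr h) _ _ (fun i => rfl)
  rw [step1, Fin.prod_univ_castSucc]
  congr 1
  · apply Finset.prod_congr rfl
    intro i _
    have hi : (i : ℕ) < l.length := i.isLt
    have h1 : (l ++ [p]).take (i.castSucc : ℕ) = l.take i :=
      List.take_append_of_le_length (le_of_lt hi)
    have h2 : (l ++ [p]).get (Fin.cast h.symm i.castSucc) = l.get i := by
      simp only [List.get_eq_getElem, Fin.coe_cast, Fin.coe_castSucc]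
      exact List.getElem_append_left hi
    rw [h1, h2]
  · have h1 : (l ++ [p]).take ((Fin.last l.length : Fin (l.length + 1)) : ℕ) = l := by
      simp [List.take_left]
    have h2 : (l ++ [p]).get (Fin.cast h.symm (Fin.last l.length)) = p := by
      simp only [List.get_eq_getElem, Fin.coe_cast, Fin.val_last]
      rw [List.getElem_append_right (le_refl l.length)]
      simp
    rw [h1, h2]

lemma fsum_snoc (Pk : T → S → A → PMF S) (Rk : T → S → A → PMF Rw)
    (πs : T → S → PMF A) (prior : PMF T) (D : List (Entry S A Rw))
    (l : List (S × A)) (p : S × A) :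
    (∑ τ : T, psPost Pk Rk prior D τ * histW πs τ (l ++ [p])) =
      (∑ τ : T, psPost Pk Rk prior D τ * histW πs τ l) *
        dptM Pk Rk πs prior D l p.1 p.2 := by
  have hnum : (∑ τ : T, psPost Pk Rk prior D τ * histW πs τ (l ++ [p])) =
      ∑ τ : T, psPost Pk Rk prior D τ * histW πs τ l * (πs τ p.1 p.2).toReal := by
    apply Finset.sum_congr rfl
    intro τ _
    rw [histW_snoc]; ring
  unfold dptM
  by_cases hN : (∑ τ : T, psPost Pk Rk prior D τ * histW πs τ l) = 0
  · have hterm : ∀ τ ∈ (Finset.univ : Finset T),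
        psPost Pk Rk prior D τ * histW πs τ l = 0 := by
      rw [← Finset.sum_eq_zero_iff_of_nonneg]
      · exact hN
      · intro τ _
        exact mul_nonneg (psPost_nonneg _ _ _ _ _) (histW_nonneg _ _ _)
    rw [hnum, hN, zero_mul]
    apply Finset.sum_eq_zero
    intro τ _
    rw [hterm τ (Finset.mem_univ τ), zero_mul]
  · rw [hnum, mul_div_cancel₀ _ hN]

lemma fsum_telescope (Pk : T → S → A → PMF S) (Rk : T → S → A → PMF Rw)
    (πs : T → S → PMF A) (prior : PMF T) (D : List (Entry S A Rw))
    (l : List (S × A)) :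
    (∑ τ : T, psPost Pk Rk prior D τ * histW πs τ l) =
      (∑ τ : T, psPost Pk Rk prior D τ) *
        ∏ i : Fin l.length,
          dptM Pk Rk πs prior D (l.take i) (l.get i).1 (l.get i).2 := by
  induction l using List.reverseRecOn with
  | nil => simp [histW]
  | append_singleton l p ih =>
      rw [prod_fin_snoc l p (fun ξ q => dptM Pk Rk πs prior D ξ q.1 q.2),
        fsum_snoc, ih]
      ring

/-- Single-episode equivalence. -/
lemma episode_eq (Pk : T → S → A → PMF S) (Rk : T → S → A → PMF Rw)
    (πs : T → S → PMF A) (prior : PMF T) (τc : T) (ρ : PMF S)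
    (D : List (Entry S A Rw)) (e : List (S × A × Rw) × S) (hne : e.1 ≠ []) :
    epPs Pk Rk πs prior τc ρ D e = epM Pk Rk πs prior τc ρ D e := by
  unfold epPs epM
  by_cases hd : (∑ τ' : T, (prior τ').toReal * envLik Pk Rk τ' D) = 0
  · have hps : ∀ τ : T, psPost Pk Rk prior D τ = 0 := by
      intro τ
      unfold psPost
      rw [hd, div_zero]
    have hlen0 : 0 < (epPairs e.1).length := by
      simp only [epPairs, List.length_map]
      exact List.length_pos_iff.mpr hne
    have hprod : (∏ i : Fin (epPairs e.1).length,
        dptM Pk Rk πs prior D ((epPairs e.1).take i)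
          ((epPairs e.1).get i).1 ((epPairs e.1).get i).2) = 0 := by
      apply Finset.prod_eq_zero (Finset.mem_univ (⟨0, hlen0⟩ : Fin (epPairs e.1).length))
      unfold dptM
      have : (∑ τ : T, psPost Pk Rk prior D τ *
          histW πs τ ((epPairs e.1).take (0 : ℕ)) *
          (πs τ ((epPairs e.1).get ⟨0, hlen0⟩).1 ((epPairs e.1).get ⟨0, hlen0⟩).2).toReal) = 0 := by
        apply Finset.sum_eq_zero
        intro τ _
        rw [hps τ]; ring
      simp only [Fin.val_mk] at this ⊢
      rw [this, zero_div]
    rw [hprod]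
    have : (∑ τ : T, psPost Pk Rk prior D τ * histW πs τ (epPairs e.1)) = 0 := by
      apply Finset.sum_eq_zero
      intro τ _
      rw [hps τ]; ring
    rw [this]
    ring
  · have hsum : (∑ τ : T, psPost Pk Rk prior D τ) = 1 := by
      unfold psPost
      rw [← Finset.sum_div, div_self hd]
    rw [fsum_telescope, hsum, one_mul]
    ring

end Aux

/-- **Multi-episode equivalence of DPT and posterior sampling** (online deployment version of
Theorem 1). With the convention `x / 0 = 0` in the definitions of `w` and `M`: for every
sequence of episodes `(e_1, …, e_K)` of horizon `H` and every `k ∈ {1, …, K}`,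
`p^ps_k(e_k) = p^M_k(e_k)`, where episode `k` is evaluated at the dataset `D_{(k-1)}`;
consequently the joint distributions of the `K` episodes generated by the two processes
coincide: `∏_k p^ps_k(e_k) = ∏_k p^M_k(e_k)`. -/
theorem dpt_ps_multi_episode_equivalence
    [Fintype T] [Nonempty T] [Fintype S] [Nonempty S] [Fintype A] [Nonempty A]
    [Fintype Rw] [Nonempty Rw]
    (Pk : T → S → A → PMF S) (Rk : T → S → A → PMF Rw) (πs : T → S → PMF A)
    (prior : PMF T) (τc : T) (ρ : PMF S)
    (K H : ℕ) (hK : 1 ≤ K) (hH : 1 ≤ H)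
    (D0 : List (Entry S A Rw))
    (es : Fin K → List (S × A × Rw) × S) (hlen : ∀ k : Fin K, (es k).1.length = H) :
    (∀ k : Fin K,
        epPs Pk Rk πs prior τc ρ (datasetUpTo D0 es k) (es k) =
          epM Pk Rk πs prior τc ρ (datasetUpTo D0 es k) (es k)) ∧
      (∏ k : Fin K, epPs Pk Rk πs prior τc ρ (datasetUpTo D0 es k) (es k)) =
        (∏ k : Fin K, epM Pk Rk πs prior τc ρ (datasetUpTo D0 es k) (es k)) := by
  have hmain : ∀ k : Fin K,
      epPs Pk Rk πs prior τc ρ (datasetUpTo D0 es k) (es k) =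
        epM Pk Rk πs prior τc ρ (datasetUpTo D0 es k) (es k) := by
    intro k
    apply episode_eq
    intro hnil
    have := hlen k
    rw [hnil] at this
    simp at this
    omega
  exact ⟨hmain, Finset.prod_congr rfl fun k _ => hmain k⟩
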